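/- Let X be a nonempty finite type, let q₀, q₁ : X → ℝ≥0 satisfy Σ_x q₀ x = Σ_x q₁ x = 1, and let R ⊆ X × X; write x ⊵ x' for (x,x') ∈ R and Lᶜ(S) = {x' ∈ X | ∃ s ∈ S, ¬(s ⊵ x')} for S ⊆ X. Then there exists p : X × X → ℝ≥0 with p(x,x') = 0 for every (x,x') ∈ R, Σ_{x'} p(x,x') = q₀ x for every x, and Σ_x p(x,x') = q₁ x' for every x', if and only if for every S ⊆ X: Σ_{x ∈ S} q₀ x ≤ Σ_{x' ∈ Lᶜ(S)} q₁ x'. -/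

import Mathlib

open scoped NNReal

open Finset
set_option linter.unusedSectionVars false
set_option linter.unusedSectionVars false

open scoped NNReal
open Finset

section Aux
variable {X : Type*} [Fintype X] [DecidableEq X] (R : X → X → Prop) [DecidableRel R]

/-- The complement of the common lower contour of `S`. -/
def NBset (S : Finset X) : Finset X := univ.filter (fun x' => ∃ s ∈ S, ¬ R s x')

lemma mem_NBset {S : Finset X} {x' : X} : x' ∈ NBset R S ↔ ∃ s ∈ S, ¬ R s x' := by
  simp [NBset]

lemma NBset_empty : NBset R (∅ : Finset X) = ∅ := by
  ext x; simp [mem_NBset]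

lemma NBset_union (S T : Finset X) : NBset R (S ∪ T) = NBset R S ∪ NBset R T := by
  ext x; simp [mem_NBset, or_and_right, exists_or]

lemma NBset_mono {S T : Finset X} (h : S ⊆ T) : NBset R S ⊆ NBset R T := by
  intro x hx
  rw [mem_NBset] at hx ⊢
  obtain ⟨s, hs, hns⟩ := hx
  exact ⟨s, h hs, hns⟩

lemma NBset_inter_subset (S T : Finset X) : NBset R (S ∩ T) ⊆ NBset R S ∩ NBset R T := by
  intro x hx
  exact mem_inter.2 ⟨NBset_mono R inter_subset_left hx, NBset_mono R inter_subset_right hx⟩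

/-- The slack of a set in the Hall-type condition. -/
def slack (q₀ q₁ : X → ℝ) (S : Finset X) : ℝ :=
  ∑ x' ∈ NBset R S, q₁ x' - ∑ x ∈ S, q₀ x

lemma slack_submodular (q₀ q₁ : X → ℝ) (h₁ : ∀ x, 0 ≤ q₁ x) (S T : Finset X) :
    slack R q₀ q₁ (S ∪ T) + slack R q₀ q₁ (S ∩ T) ≤ slack R q₀ q₁ S + slack R q₀ q₁ T := by
  unfold slack
  have h0 : ∑ x ∈ S ∪ T, q₀ x + ∑ x ∈ S ∩ T, q₀ x = ∑ x ∈ S, q₀ x + ∑ x ∈ T, q₀ x :=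
    Finset.sum_union_inter
  have h1 : ∑ x' ∈ NBset R (S ∪ T), q₁ x' + ∑ x' ∈ NBset R (S ∩ T), q₁ x'
      ≤ ∑ x' ∈ NBset R S, q₁ x' + ∑ x' ∈ NBset R T, q₁ x' := by
    rw [NBset_union]
    calc ∑ x' ∈ NBset R S ∪ NBset R T, q₁ x' + ∑ x' ∈ NBset R (S ∩ T), q₁ x'
        ≤ ∑ x' ∈ NBset R S ∪ NBset R T, q₁ x' + ∑ x' ∈ NBset R S ∩ NBset R T, q₁ x' := by
          exact add_le_add_right (Finset.sum_le_sum_of_subset_of_nonneg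
            (NBset_inter_subset R S T) (fun i _ _ => h₁ i)) _
      _ = ∑ x' ∈ NBset R S, q₁ x' + ∑ x' ∈ NBset R T, q₁ x' := Finset.sum_union_inter
  linarith

end Aux

section Main
variable {X : Type*} [Fintype X] [DecidableEq X] (R : X → X → Prop) [DecidableRel R]

open scoped Classical in
noncomputable def suppF (q : X → ℝ) : Finset X := univ.filter (fun x => q x ≠ 0)

lemma mem_suppF {q : X → ℝ} {x : X} : x ∈ suppF q ↔ q x ≠ 0 := by
  classical simp [suppF]

open scoped Classical in
noncomputable def ntight (q₀ q₁ : X → ℝ) : Finset (Finset X) :=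
  (univ : Finset X).powerset.filter (fun S => slack R q₀ q₁ S ≠ 0)

lemma mem_ntight {q₀ q₁ : X → ℝ} {S : Finset X} :
    S ∈ ntight R q₀ q₁ ↔ slack R q₀ q₁ S ≠ 0 := by
  classical simp [ntight]

lemma ntight_card_le (q₀ q₁ : X → ℝ) :
    (ntight R q₀ q₁).card ≤ 2 ^ Fintype.card X := by
  classical
  calc (ntight R q₀ q₁).card ≤ (univ : Finset X).powerset.card :=
        Finset.card_le_card (by intro S hS; classical exact Finset.mem_powerset.2 (subset_univ S))
    _ = 2 ^ Fintype.card X := by rw [Finset.card_powerset, Finset.card_univ]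

noncomputable def FOSDmeasure (q₀ q₁ : X → ℝ) : ℕ :=
  ((suppF q₀).card + (suppF q₁).card) * (2 ^ Fintype.card X + 1) + (ntight R q₀ q₁).card

end Main

section MainLemma
variable {X : Type*} [Fintype X] [DecidableEq X] (R : X → X → Prop) [DecidableRel R]

lemma FOSD_exists (n : ℕ) :
    ∀ (q₀ q₁ : X → ℝ), (∀ x, 0 ≤ q₀ x) → (∀ x, 0 ≤ q₁ x) →
    (∑ x, q₀ x = ∑ x, q₁ x) →
    (∀ S : Finset X, ∑ x ∈ S, q₀ x ≤ ∑ x' ∈ NBset R S, q₁ x') →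
    FOSDmeasure R q₀ q₁ ≤ n →
    ∃ p : X → X → ℝ, (∀ x y, 0 ≤ p x y) ∧ (∀ x y, R x y → p x y = 0) ∧
      (∀ x, ∑ y, p x y = q₀ x) ∧ (∀ y, ∑ x, p x y = q₁ y) := by
  induction n using Nat.strong_induction_on with
  | _ n ih =>
  intro q₀ q₁ h₀ h₁ hsum hall hn
  by_cases hq : ∀ x, q₀ x = 0
  · -- base case: everything is zero
    have hq1 : ∀ x, q₁ x = 0 := by
      have hz : ∑ x, q₁ x = 0 := by
        rw [← hsum]; exact Finset.sum_eq_zero (fun x _ => hq x)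
      intro x
      exact (Finset.sum_eq_zero_iff_of_nonneg (fun i _ => h₁ i)).1 hz x (mem_univ x)
    exact ⟨fun _ _ => 0, fun _ _ => le_refl 0, fun _ _ _ => rfl,
      fun x => by simp [hq x], fun y => by simp [hq1 y]⟩
  · push_neg at hq
    obtain ⟨x₀, hx₀⟩ := hq
    have hx₀pos : 0 < q₀ x₀ := lt_of_le_of_ne (h₀ x₀) (Ne.symm hx₀)
    have hδ : ∀ S : Finset X, 0 ≤ slack R q₀ q₁ S := fun S => sub_nonneg.2 (hall S)
    classical
    set Tstar := ((univ : Finset X).powerset.filter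
      (fun S => slack R q₀ q₁ S = 0 ∧ x₀ ∉ S)).sup id with hTdef
    have hTprop : slack R q₀ q₁ Tstar = 0 ∧ x₀ ∉ Tstar := by
      rw [hTdef]
      apply Finset.sup_induction (p := fun T => slack R q₀ q₁ T = 0 ∧ x₀ ∉ T)
      · constructor
        · simp [slack, NBset_empty]
        · simp
      · intro a ha b hb
        constructor
        · have h1 := slack_submodular R q₀ q₁ h₁ a b
          have h2 := hδ (a ∪ b)
          have h3 := hδ (a ∩ b)
          have : slack R q₀ q₁ (a ∪ b) = 0 := by linarith [ha.1, hb.1]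
          simpa [sup_eq_union] using this
        · simp only [sup_eq_union, mem_union]
          rintro (h | h)
          · exact ha.2 h
          · exact hb.2 h
      · intro S hS
        exact (mem_filter.1 hS).2
    have hTle : ∀ S : Finset X, slack R q₀ q₁ S = 0 → x₀ ∉ S → S ⊆ Tstar := by
      intro S h1 h2
      exact Finset.le_sup (f := id)
        (Finset.mem_filter.2 ⟨Finset.mem_powerset.2 (subset_univ S), h1, h2⟩)
    have key : q₀ x₀ ≤ ∑ y ∈ NBset R {x₀} \ NBset R Tstar, q₁ y := by
      have h := hall (insert x₀ Tstar)
      rw [Finset.sum_insert hTprop.2] at h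
      have hNB : NBset R (insert x₀ Tstar)
          = NBset R Tstar ∪ (NBset R {x₀} \ NBset R Tstar) := by
        rw [Finset.insert_eq, NBset_union, Finset.union_sdiff_self_eq_union,
          Finset.union_comm]
      rw [hNB, Finset.sum_union Finset.disjoint_sdiff] at h
      have ht := hTprop.1
      unfold slack at ht
      linarith
    have hex : ∃ y, y ∈ NBset R {x₀} \ NBset R Tstar ∧ 0 < q₁ y := by
      by_contra hc
      push_neg at hc
      have : ∑ y ∈ NBset R {x₀} \ NBset R Tstar, q₁ y ≤ 0 :=
        Finset.sum_nonpos (fun i hi => hc i hi)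
      linarith
    obtain ⟨x', hx'mem, hx'pos⟩ := hex
    have hx'nb : x' ∈ NBset R {x₀} := (Finset.mem_sdiff.1 hx'mem).1
    have hx'nT : x' ∉ NBset R Tstar := (Finset.mem_sdiff.1 hx'mem).2
    have hnR : ¬ R x₀ x' := by
      rcases (mem_NBset R).1 hx'nb with ⟨s, hs, h⟩
      rw [Finset.mem_singleton] at hs
      subst hs; exact h
    have hbad : ∀ S : Finset X, x₀ ∉ S → x' ∈ NBset R S → 0 < slack R q₀ q₁ S := by
      intro S h1 h2
      rcases (hδ S).lt_or_eq with h | h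
      · exact h
      · exact absurd (NBset_mono R (hTle S h.symm h1) h2) hx'nT
    set Sbad := (univ : Finset X).powerset.filter
      (fun S => x₀ ∉ S ∧ x' ∈ NBset R S) with hSbaddef
    set E : Finset ℝ := insert (q₀ x₀) (insert (q₁ x') (Sbad.image (slack R q₀ q₁)))
      with hEdef
    have hEne : E.Nonempty := ⟨q₀ x₀, mem_insert_self _ _⟩
    set ε := E.min' hEne with hεdef
    have hεmem : ε ∈ E := E.min'_mem hEne
    have hεq0 : ε ≤ q₀ x₀ := E.min'_le _ (mem_insert_self _ _)
    have hεq1 : ε ≤ q₁ x' := E.min'_le _ (mem_insert.2 (Or.inr (mem_insert_self _ _)))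
    have hεS : ∀ S ∈ Sbad, ε ≤ slack R q₀ q₁ S := fun S hS =>
      E.min'_le _ (mem_insert.2 (Or.inr (mem_insert.2 (Or.inr (mem_image_of_mem _ hS)))))
    have hεpos : 0 < ε := by
      rcases mem_insert.1 hεmem with h | h
      · rw [h]; exact hx₀pos
      rcases mem_insert.1 h with h | h
      · rw [h]; exact hx'pos
      · obtain ⟨S, hS, hSe⟩ := mem_image.1 h
        rw [← hSe]
        exact hbad S (mem_filter.1 hS).2.1 (mem_filter.1 hS).2.2
    set q₀' := Function.update q₀ x₀ (q₀ x₀ - ε) with hq0'def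
    set q₁' := Function.update q₁ x' (q₁ x' - ε) with hq1'def
    have hsum0 : ∀ S : Finset X, ∑ x ∈ S, q₀' x
        = ∑ x ∈ S, q₀ x - (if x₀ ∈ S then ε else 0) := by
      intro S
      by_cases h : x₀ ∈ S
      · rw [if_pos h]
        have e1 : ∑ x ∈ S, q₀' x = ∑ x ∈ S.erase x₀, q₀' x + q₀' x₀ :=
          (Finset.sum_erase_add S _ h).symm
        have e2 : ∑ x ∈ S, q₀ x = ∑ x ∈ S.erase x₀, q₀ x + q₀ x₀ :=
          (Finset.sum_erase_add S _ h).symm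
        have e3 : ∑ x ∈ S.erase x₀, q₀' x = ∑ x ∈ S.erase x₀, q₀ x :=
          Finset.sum_congr rfl
            (fun x hx => Function.update_of_ne (Finset.ne_of_mem_erase hx) _ _)
        rw [e1, e2, e3, hq0'def, Function.update_self]
        ring
      · rw [if_neg h, sub_zero]
        exact Finset.sum_congr rfl
          (fun x hx => Function.update_of_ne (by rintro rfl; exact h hx) _ _)
    have hsum1 : ∀ S : Finset X, ∑ y ∈ S, q₁' y
        = ∑ y ∈ S, q₁ y - (if x' ∈ S then ε else 0) := by
      intro S
      by_cases h : x' ∈ S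
      · rw [if_pos h]
        have e1 : ∑ y ∈ S, q₁' y = ∑ y ∈ S.erase x', q₁' y + q₁' x' :=
          (Finset.sum_erase_add S _ h).symm
        have e2 : ∑ y ∈ S, q₁ y = ∑ y ∈ S.erase x', q₁ y + q₁ x' :=
          (Finset.sum_erase_add S _ h).symm
        have e3 : ∑ y ∈ S.erase x', q₁' y = ∑ y ∈ S.erase x', q₁ y :=
          Finset.sum_congr rfl
            (fun y hy => Function.update_of_ne (Finset.ne_of_mem_erase hy) _ _)
        rw [e1, e2, e3, hq1'def, Function.update_self]
        ring
      · rw [if_neg h, sub_zero]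
        exact Finset.sum_congr rfl
          (fun y hy => Function.update_of_ne (by rintro rfl; exact h hy) _ _)
    have h₀' : ∀ x, 0 ≤ q₀' x := by
      intro x
      by_cases h : x = x₀
      · subst h; rw [hq0'def, Function.update_self]; linarith
      · rw [hq0'def, Function.update_of_ne h]; exact h₀ x
    have h₁' : ∀ y, 0 ≤ q₁' y := by
      intro y
      by_cases h : y = x'
      · subst h; rw [hq1'def, Function.update_self]; linarith
      · rw [hq1'def, Function.update_of_ne h]; exact h₁ y
    have hsum' : ∑ x, q₀' x = ∑ y, q₁' y := by
      rw [hsum0 univ, hsum1 univ, if_pos (mem_univ _), if_pos (mem_univ _), hsum]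
    have hslack' : ∀ S : Finset X, slack R q₀' q₁' S =
        slack R q₀ q₁ S - (if x' ∈ NBset R S then ε else 0)
          + (if x₀ ∈ S then ε else 0) := by
      intro S
      unfold slack
      rw [hsum0, hsum1]
      ring
    have hx₀nb : ∀ S : Finset X, x₀ ∈ S → x' ∈ NBset R S := by
      intro S hS
      exact NBset_mono R (by intro z hz; rw [Finset.mem_singleton] at hz; subst hz; exact hS)
        hx'nb
    have hall' : ∀ S : Finset X, ∑ x ∈ S, q₀' x ≤ ∑ y ∈ NBset R S, q₁' y := by
      intro S
      have h : 0 ≤ slack R q₀' q₁' S := by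
        rw [hslack' S]
        by_cases hS0 : x₀ ∈ S
        · rw [if_pos (hx₀nb S hS0), if_pos hS0]
          have := hδ S; linarith
        · by_cases hx'S : x' ∈ NBset R S
          · rw [if_pos hx'S, if_neg hS0]
            have hSb : S ∈ Sbad := mem_filter.2
              ⟨mem_powerset.2 (subset_univ S), hS0, hx'S⟩
            have := hεS S hSb; linarith
          · rw [if_neg hx'S, if_neg hS0]
            have := hδ S; linarith
      unfold slack at h
      linarith
    -- support inclusions
    have hs0sub : suppF q₀' ⊆ suppF q₀ := by
      intro x hx
      rw [mem_suppF] at hx ⊢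
      by_cases h : x = x₀
      · subst h; exact hx₀
      · intro h0; apply hx; rw [hq0'def, Function.update_of_ne h, h0]
    have hs1sub : suppF q₁' ⊆ suppF q₁ := by
      intro y hy
      rw [mem_suppF] at hy ⊢
      by_cases h : y = x'
      · subst h; exact ne_of_gt hx'pos
      · intro h0; apply hy; rw [hq1'def, Function.update_of_ne h, h0]
    -- measure decrease
    have hK1 := ntight_card_le R q₀ q₁
    have hK1' := ntight_card_le R q₀' q₁'
    have hsupcase : ∀ (hlt : (suppF q₀').card + (suppF q₁').card
        < (suppF q₀).card + (suppF q₁).card),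
        FOSDmeasure R q₀' q₁' < FOSDmeasure R q₀ q₁ := by
      intro hlt
      unfold FOSDmeasure
      set K := 2 ^ Fintype.card X
      set s' := (suppF q₀').card + (suppF q₁').card
      set s := (suppF q₀).card + (suppF q₁).card
      calc s' * (K + 1) + (ntight R q₀' q₁').card ≤ s' * (K + 1) + K := by
            exact Nat.add_le_add_left hK1' _
        _ < (s' + 1) * (K + 1) := by nlinarith
        _ ≤ s * (K + 1) := Nat.mul_le_mul_right _ hlt
        _ ≤ s * (K + 1) + (ntight R q₀ q₁).card := Nat.le_add_right _ _
    have hmeasure : FOSDmeasure R q₀' q₁' < FOSDmeasure R q₀ q₁ := by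
      rcases mem_insert.1 hεmem with hc | hc
      · -- ε = q₀ x₀ : the source x₀ leaves the support of q₀
        apply hsupcase
        have hx₀out : x₀ ∉ suppF q₀' := by
          rw [mem_suppF]
          simp only [ne_eq, not_not]
          rw [hq0'def, Function.update_self, hc]
          ring
        have h1 : (suppF q₀').card < (suppF q₀).card := by
          apply Finset.card_lt_card
          constructor
          · exact hs0sub
          · intro hsub
            exact hx₀out (hsub (mem_suppF.2 hx₀))
        have h2 : (suppF q₁').card ≤ (suppF q₁).card := Finset.card_le_card hs1sub
        omega
      rcases mem_insert.1 hc with hc | hc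
      · -- ε = q₁ x' : x' leaves the support of q₁
        apply hsupcase
        have hx'out : x' ∉ suppF q₁' := by
          rw [mem_suppF]
          simp only [ne_eq, not_not]
          rw [hq1'def, Function.update_self, hc]
          ring
        have h1 : (suppF q₁').card < (suppF q₁).card := by
          apply Finset.card_lt_card
          constructor
          · exact hs1sub
          · intro hsub
            exact hx'out (hsub (mem_suppF.2 (ne_of_gt hx'pos)))
        have h2 : (suppF q₀').card ≤ (suppF q₀).card := Finset.card_le_card hs0sub
        omega
      · -- ε = slack of some bad set S₀ : a new tight set appears
        obtain ⟨S₀, hS₀mem, hS₀e⟩ := mem_image.1 hc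
        have hS₀x₀ : x₀ ∉ S₀ := (mem_filter.1 hS₀mem).2.1
        have hS₀x' : x' ∈ NBset R S₀ := (mem_filter.1 hS₀mem).2.2
        have hnt : ntight R q₀' q₁' ⊂ ntight R q₀ q₁ := by
          constructor
          · intro S hS
            rw [mem_ntight] at hS ⊢
            intro h0
            apply hS
            rw [hslack' S, h0]
            by_cases hS0 : x₀ ∈ S
            · rw [if_pos (hx₀nb S hS0), if_pos hS0]; ring
            · by_cases hx'S : x' ∈ NBset R S
              · exact absurd h0 (ne_of_gt (hbad S hS0 hx'S))
              · rw [if_neg hx'S, if_neg hS0]; ring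
          · intro hsub
            have h1 : S₀ ∈ ntight R q₀ q₁ := by
              rw [mem_ntight, hS₀e]
              exact ne_of_gt hεpos
            have h2 : S₀ ∉ ntight R q₀' q₁' := by
              rw [mem_ntight]
              simp only [ne_eq, not_not]
              rw [hslack' S₀, if_pos hS₀x', if_neg hS₀x₀, hS₀e]
              ring
            exact h2 (hsub h1)
        have h1 : (ntight R q₀' q₁').card < (ntight R q₀ q₁).card :=
          Finset.card_lt_card hnt
        have h2 : (suppF q₀').card ≤ (suppF q₀).card := Finset.card_le_card hs0sub
        have h3 : (suppF q₁').card ≤ (suppF q₁).card := Finset.card_le_card hs1sub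
        unfold FOSDmeasure
        have h4 : ((suppF q₀').card + (suppF q₁').card) * (2 ^ Fintype.card X + 1)
            ≤ ((suppF q₀).card + (suppF q₁).card) * (2 ^ Fintype.card X + 1) :=
          Nat.mul_le_mul_right _ (by omega)
        omega
    obtain ⟨p', hp'nn, hp'R, hp'row, hp'col⟩ :=
      ih (FOSDmeasure R q₀' q₁') (lt_of_lt_of_le hmeasure hn) q₀' q₁' h₀' h₁' hsum' hall'
        (le_refl _)
    refine ⟨fun x y => p' x y + (if x = x₀ ∧ y = x' then ε else 0), ?_, ?_, ?_, ?_⟩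
    · intro x y
      dsimp only
      apply add_nonneg (hp'nn x y)
      split_ifs
      · exact le_of_lt hεpos
      · exact le_refl 0
    · intro x y hR
      dsimp only
      rw [hp'R x y hR]
      rw [if_neg, add_zero]
      rintro ⟨rfl, rfl⟩
      exact hnR hR
    · intro x
      dsimp only
      rw [Finset.sum_add_distrib, hp'row x]
      have hind : ∑ y, (if x = x₀ ∧ y = x' then ε else 0)
          = if x = x₀ then ε else 0 := by
        by_cases h : x = x₀
        · subst h
          simp
        · simp [h]
      rw [hind]
      by_cases h : x = x₀
      · subst h
        rw [if_pos rfl, hq0'def, Function.update_self]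
        ring
      · rw [if_neg h, hq0'def, Function.update_of_ne h, add_zero]
    · intro y
      dsimp only
      rw [Finset.sum_add_distrib, hp'col y]
      have hind : ∑ x, (if x = x₀ ∧ y = x' then ε else 0)
          = if y = x' then ε else 0 := by
        by_cases h : y = x'
        · subst h
          simp
        · simp [h]
      rw [hind]
      by_cases h : y = x'
      · subst h
        rw [if_pos rfl, hq1'def, Function.update_self]
        ring
      · rw [if_neg h, hq1'def, Function.update_of_ne h, add_zero]

end MainLemma

/-- **generalized FOSD characterization, Theorem 2 part 1.**
A distribution over instrument-response types with marginals `q₀, q₁` that vanishes on the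
ruled-out set `R` exists if and only if, for every subset `S` of treatment values, the
`q₀`-mass of `S` is at most the `q₁`-mass of the complement of the common lower contour
of `S` under the relation induced by `R`. -/
theorem generalized_FOSD
    {X : Type*} [Fintype X] [Nonempty X] [DecidableEq X]
    (q₀ q₁ : X → NNReal) (h0 : ∑ x : X, q₀ x = 1) (h1 : ∑ x : X, q₁ x = 1)
    (R : X → X → Prop) [DecidableRel R] :
    (∃ p : X × X → NNReal,
      (∀ x x' : X, R x x' → p (x, x') = 0) ∧
      (∀ x : X, ∑ x' : X, p (x, x') = q₀ x) ∧
      (∀ x' : X, ∑ x : X, p (x, x') = q₁ x'))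
    ↔
    (∀ S : Finset X, ∑ x ∈ S, q₀ x ≤
        ∑ x' ∈ Finset.univ.filter (fun x' => ∃ s ∈ S, ¬ R s x'), q₁ x') := by
  have hfeq : ∀ S : Finset X,
      Finset.univ.filter (fun x' => ∃ s ∈ S, ¬ R s x') = NBset R S := by
    intro S
    ext y
    simp [mem_NBset]
  constructor
  · rintro ⟨p, hpR, hprow, hpcol⟩ S
    rw [hfeq]
    calc ∑ x ∈ S, q₀ x = ∑ x ∈ S, ∑ x' : X, p (x, x') :=
          Finset.sum_congr rfl (fun x _ => (hprow x).symm)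
      _ = ∑ x ∈ S, ∑ x' ∈ NBset R S, p (x, x') := by
          apply Finset.sum_congr rfl
          intro x hx
          refine (Finset.sum_subset (subset_univ _) ?_).symm
          intro y _ hy
          apply hpR
          by_contra hc
          exact hy ((mem_NBset R).2 ⟨x, hx, hc⟩)
      _ = ∑ x' ∈ NBset R S, ∑ x ∈ S, p (x, x') := Finset.sum_comm
      _ ≤ ∑ x' ∈ NBset R S, ∑ x : X, p (x, x') :=
          Finset.sum_le_sum (fun y _ => Finset.sum_le_sum_of_subset (subset_univ S))
      _ = ∑ x' ∈ NBset R S, q₁ x' := Finset.sum_congr rfl (fun y _ => hpcol y)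
  · intro hall
    have h₀' : ∀ x, (0:ℝ) ≤ (q₀ x : ℝ) := fun x => (q₀ x).coe_nonneg
    have h₁' : ∀ x, (0:ℝ) ≤ (q₁ x : ℝ) := fun x => (q₁ x).coe_nonneg
    have hsum' : ∑ x, ((q₀ x : ℝ)) = ∑ x, ((q₁ x : ℝ)) := by
      have := h0.trans h1.symm
      exact_mod_cast this
    have hall' : ∀ S : Finset X, ∑ x ∈ S, ((q₀ x : ℝ)) ≤ ∑ y ∈ NBset R S, ((q₁ y : ℝ)) := by
      intro S
      have := hall S
      rw [hfeq] at this
      exact_mod_cast this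
    obtain ⟨p, hnn, hR, hrow, hcol⟩ :=
      FOSD_exists R (FOSDmeasure R (fun x => (q₀ x : ℝ)) (fun x => (q₁ x : ℝ)))
        (fun x => (q₀ x : ℝ)) (fun x => (q₁ x : ℝ)) h₀' h₁' hsum' hall' (le_refl _)
    refine ⟨fun z => (p z.1 z.2).toNNReal, ?_, ?_, ?_⟩
    · intro x y hxy
      simp [hR x y hxy]
    · intro x
      apply NNReal.coe_injective
      rw [NNReal.coe_sum]
      calc ∑ y : X, ((p x y).toNNReal : ℝ) = ∑ y : X, p x y :=
            Finset.sum_congr rfl (fun y _ => Real.coe_toNNReal _ (hnn x y))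
        _ = (q₀ x : ℝ) := hrow x
    · intro y
      apply NNReal.coe_injective
      rw [NNReal.coe_sum]
      calc ∑ x : X, ((p x y).toNNReal : ℝ) = ∑ x : X, p x y :=
            Finset.sum_congr rfl (fun x _ => Real.coe_toNNReal _ (hnn x y))
        _ = (q₁ y : ℝ) := hcol y
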